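/- Orthogonal projection residual decomposition: let E be a finite-dimensional real inner product space, let U and V be linear subspaces of E, and for a subspace S let P_S denote the orthogonal projection of E onto S. Let V' = {v − P_U v : v ∈ V} be the image of V under the map id − P_U (a linear subspace of E). Then for every y ∈ E, ‖y − P_{U + V} y‖² = ‖y − P_U y‖² − ‖P_{V'} y‖², where U + V denotes the subspace spanned by U and V. -/

import Mathlib

open scoped RealInnerProductSpace

/-- Orthogonal projection residual decomposition: in a
finite-dimensional real inner product space, for subspaces `U, V` and
`V' = (id − P_U) V`, every `y` satisfies
`‖y − P_{U+V} y‖² = ‖y − P_U y‖² − ‖P_{V'} y‖²`. -/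
theorem orthogonalProjection_residual_decomposition
    {E : Type*} [NormedAddCommGroup E] [InnerProductSpace ℝ E] [FiniteDimensional ℝ E]
    (U V : Submodule ℝ E) (y : E) :
    ‖y - (Submodule.orthogonalProjectionOnto (U ⊔ V) y : E)‖ ^ 2 =
      ‖y - (Submodule.orthogonalProjectionOnto U y : E)‖ ^ 2 -
        ‖(Submodule.orthogonalProjectionOnto
            (Submodule.map
              (LinearMap.id - U.subtype.comp (Submodule.orthogonalProjectionOnto U).toLinearMap) V)
            y : E)‖ ^ 2 := by
  set W := Submodule.map
      (LinearMap.id - U.subtype.comp (Submodule.orthogonalProjectionOnto U).toLinearMap) V with hWdef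
  have hWperp : W ≤ Uᗮ := by
    rintro _ ⟨v, hv, rfl⟩
    simpa using Submodule.sub_starProjection_mem_orthogonal (K := U) v
  have hWle : W ≤ U ⊔ V := by
    rintro _ ⟨v, hv, rfl⟩
    simp only [LinearMap.sub_apply, LinearMap.id_apply, LinearMap.coe_comp,
      Function.comp_apply, Submodule.coe_subtype, ContinuousLinearMap.coe_coe]
    exact Submodule.sub_mem _ (Submodule.mem_sup_right hv)
      (Submodule.mem_sup_left (Submodule.orthogonalProjectionOnto U v).2)
  set a : E := y - (Submodule.orthogonalProjectionOnto U y : E) with ha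
  set b : E := (Submodule.orthogonalProjectionOnto W y : E) with hb
  -- z = y - P_U y - P_W y is orthogonal to U and to W
  have hzU : ∀ u ∈ U, ⟪y - ((Submodule.orthogonalProjectionOnto U y : E) + b), u⟫ = 0 := by
    intro u hu
    have h1 : ⟪y - (Submodule.orthogonalProjectionOnto U y : E), u⟫ = 0 :=
      Submodule.starProjection_inner_eq_zero y u hu
    have h2 : ⟪b, u⟫ = 0 := by
      rw [real_inner_comm]
      exact hWperp (Submodule.orthogonalProjectionOnto W y).2 u hu
    have : y - ((Submodule.orthogonalProjectionOnto U y : E) + b)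
        = (y - (Submodule.orthogonalProjectionOnto U y : E)) - b := by abel
    rw [this, inner_sub_left, h1, h2, sub_zero]
  have hzW : ∀ w ∈ W, ⟪y - ((Submodule.orthogonalProjectionOnto U y : E) + b), w⟫ = 0 := by
    intro w hw
    have h1 : ⟪y - b, w⟫ = 0 := Submodule.starProjection_inner_eq_zero y w hw
    have h2 : ⟪(Submodule.orthogonalProjectionOnto U y : E), w⟫ = 0 :=
      hWperp hw _ (Submodule.orthogonalProjectionOnto U y).2
    have : y - ((Submodule.orthogonalProjectionOnto U y : E) + b)
        = (y - b) - (Submodule.orthogonalProjectionOnto U y : E) := by abel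
    rw [this, inner_sub_left, h1, h2, sub_zero]
  have key : (Submodule.orthogonalProjectionOnto (U ⊔ V) y : E) = (Submodule.orthogonalProjectionOnto U y : E) + b := by
    apply Submodule.eq_starProjection_of_mem_of_inner_eq_zero
    · exact Submodule.add_mem _ (Submodule.mem_sup_left (Submodule.orthogonalProjectionOnto U y).2)
        (hWle (Submodule.orthogonalProjectionOnto W y).2)
    · intro w hw
      obtain ⟨u, hu, v, hv, rfl⟩ := Submodule.mem_sup.mp hw
      have hvsplit : v = (Submodule.orthogonalProjectionOnto U v : E) + (v - (Submodule.orthogonalProjectionOnto U v : E)) :=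
        by abel
      have hv' : v - (Submodule.orthogonalProjectionOnto U v : E) ∈ W :=
        ⟨v, hv, by simp [LinearMap.sub_apply]⟩
      rw [inner_add_right, hzU u hu, hvsplit, inner_add_right,
        hzU _ (Submodule.orthogonalProjectionOnto U v).2, hzW _ hv']
      ring
  have hab : ⟪a - b, b⟫ = 0 := by
    have : a - b = y - ((Submodule.orthogonalProjectionOnto U y : E) + b) := by rw [ha]; abel
    rw [this]
    exact hzW b (Submodule.orthogonalProjectionOnto W y).2
  have hyz : y - (Submodule.orthogonalProjectionOnto (U ⊔ V) y : E) = a - b := by rw [key, ha]; abel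
  rw [hyz]
  have hinner : ⟪a, b⟫ = ‖b‖ ^ 2 := by
    have := hab
    rw [inner_sub_left, sub_eq_zero] at this
    rw [this, real_inner_self_eq_norm_sq]
  rw [norm_sub_sq_real, hinner]
  ring
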